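/- The space c_0 has the 2-SEP: for all separable Banach spaces Y, closed subspaces X ⊆ Y, and bounded linear operators T : X → c_0, there exists a bounded linear operator T̃ : Y → c_0 extending T with ‖T̃‖ ≤ 2‖T‖. -/

import Mathlib

open Filter Topology ENNReal


noncomputable def c0Submodule (Z : ℕ → Type*) [∀ j, NormedAddCommGroup (Z j)]
    [∀ j, NormedSpace ℝ (Z j)] : Submodule ℝ (lp Z ∞) where
  carrier := {f | Tendsto (fun j => ‖(f : ∀ j, Z j) j‖) atTop (𝓝 0)}
  add_mem' := by
    intro f g hf hg
    have h := hf.add hg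
    rw [add_zero] at h
    refine squeeze_zero (fun j => norm_nonneg _) (fun j => ?_) h
    simp only [lp.coeFn_add, Pi.add_apply]
    exact norm_add_le _ _
  zero_mem' := by
    simp only [Set.mem_setOf_eq, lp.coeFn_zero, Pi.zero_apply, norm_zero]
    exact tendsto_const_nhds
  smul_mem' := by
    intro c f hf
    have h := hf.const_mul ‖c‖
    rw [mul_zero] at h
    refine squeeze_zero (fun j => norm_nonneg _) (fun j => ?_) h
    simp only [lp.coeFn_smul, Pi.smul_apply]
    rw [norm_smul]

lemma mem_c0Submodule_iff (f : lp (fun _ : ℕ => ℝ) ∞) :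
    f ∈ c0Submodule (fun _ : ℕ => ℝ) ↔ Tendsto (fun j => ‖f j‖) atTop (𝓝 0) := Iff.rfl

set_option synthInstance.maxHeartbeats 1000000 in
noncomputable def evalC0 (n : ℕ) : ↥(c0Submodule (fun _ : ℕ => ℝ)) →L[ℝ] ℝ :=
  LinearMap.mkContinuous
    { toFun := fun f => (f : lp (fun _ : ℕ => ℝ) ∞) n
      map_add' := by intro f g; simp
      map_smul' := by intro c f; simp }
    1 (fun f => by
      show ‖(f : lp (fun _ : ℕ => ℝ) ∞) n‖ ≤ 1 * ‖f‖
      simpa using lp.norm_apply_le_norm ENNReal.top_ne_zero (f : lp (fun _ : ℕ => ℝ) ∞) n)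

lemma evalC0_apply (n : ℕ) (f : ↥(c0Submodule (fun _ : ℕ => ℝ))) :
    evalC0 n f = (f : lp (fun _ : ℕ => ℝ) ∞) n := rfl

set_option maxHeartbeats 1000000 in
set_option synthInstance.maxHeartbeats 1000000 in
theorem stmt12 {Y : Type*} [NormedAddCommGroup Y] [NormedSpace ℝ Y] [CompleteSpace Y]
    [TopologicalSpace.SeparableSpace Y]
    (X : Subspace ℝ Y) (hX : IsClosed (X : Set Y))
    (T : ↥X →L[ℝ] ↥(c0Submodule (fun _ : ℕ => ℝ))) :
    ∃ T' : Y →L[ℝ] ↥(c0Submodule (fun _ : ℕ => ℝ)),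
      (∀ x : ↥X, T' (x : Y) = T x) ∧ ‖T'‖ ≤ 2 * ‖T‖ := by
  classical
  set M : ℝ := ‖T‖ with hM
  have hM0 : 0 ≤ M := norm_nonneg T
  -- dense sequence
  have : Nonempty Y := ⟨0⟩
  obtain ⟨y, hy⟩ := TopologicalSpace.exists_dense_seq Y
  -- the coordinate functionals
  set f : ℕ → (↥X →L[ℝ] ℝ) := fun n => (evalC0 n).comp T with hf
  have hfnorm : ∀ n, ‖f n‖ ≤ M := by
    intro n
    refine ContinuousLinearMap.opNorm_le_bound _ hM0 (fun x => ?_)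
    have h1 : ‖f n x‖ ≤ ‖T x‖ := by
      simpa [hf, evalC0_apply] using
        lp.norm_apply_le_norm ENNReal.top_ne_zero ((T x : lp (fun _ : ℕ => ℝ) ∞)) n
    exact h1.trans (T.le_opNorm x)
  have hftend : ∀ x : ↥X, Tendsto (fun n => f n x) atTop (𝓝 0) := by
    intro x
    have h2 : Tendsto (fun j : ℕ => ‖((T x : lp (fun _ : ℕ => ℝ) ∞)) j‖) atTop (𝓝 0) :=
      (mem_c0Submodule_iff _).mp (T x).2
    rw [tendsto_zero_iff_norm_tendsto_zero]
    exact h2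
  -- Hahn-Banach extensions
  have hHB : ∀ n, ∃ F : Y →L[ℝ] ℝ, (∀ x : ↥X, F x = f n x) ∧ ‖F‖ = ‖f n‖ :=
    fun n => exists_extension_norm_eq X (f n)
  choose F hFext hFnorm using hHB
  have hFnormM : ∀ n, ‖F n‖ ≤ M := fun n => (hFnorm n).le.trans (hfnorm n)
  -- the set W of functionals vanishing on X with norm ≤ M
  set W : Set (Y →L[ℝ] ℝ) := {g | ‖g‖ ≤ M ∧ ∀ x : ↥X, g x = 0} with hW
  have hW0 : (0 : Y →L[ℝ] ℝ) ∈ W := ⟨by simpa using hM0, fun x => rfl⟩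
  -- the pseudometric
  set d : (Y →L[ℝ] ℝ) → (Y →L[ℝ] ℝ) → ℝ :=
    fun F' g => ∑' k, (1 / 2 : ℝ) ^ k * min 1 ‖F' (y k) - g (y k)‖ with hd
  have hterm_nonneg : ∀ (F' g : Y →L[ℝ] ℝ) (k : ℕ),
      0 ≤ (1 / 2 : ℝ) ^ k * min 1 ‖F' (y k) - g (y k)‖ := fun F' g k =>
    mul_nonneg (by positivity) (le_min zero_le_one (norm_nonneg _))
  have hterm_le : ∀ (F' g : Y →L[ℝ] ℝ) (k : ℕ),
      (1 / 2 : ℝ) ^ k * min 1 ‖F' (y k) - g (y k)‖ ≤ (1 / 2 : ℝ) ^ k := fun F' g k => by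
    have : min 1 ‖F' (y k) - g (y k)‖ ≤ 1 := min_le_left _ _
    nlinarith [pow_nonneg (by norm_num : (0:ℝ) ≤ 1/2) k]
  have hsum : ∀ (F' g : Y →L[ℝ] ℝ),
      Summable (fun k => (1 / 2 : ℝ) ^ k * min 1 ‖F' (y k) - g (y k)‖) := fun F' g =>
    Summable.of_nonneg_of_le (hterm_nonneg F' g) (hterm_le F' g) summable_geometric_two
  have hd_nonneg : ∀ (F' g : Y →L[ℝ] ℝ), 0 ≤ d F' g := fun F' g =>
    tsum_nonneg (hterm_nonneg F' g)
  have hd_self : ∀ g : Y →L[ℝ] ℝ, d g g = 0 := by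
    intro g; simp [hd]
  have hd_term_le : ∀ (F' g : Y →L[ℝ] ℝ) (k : ℕ),
      (1 / 2 : ℝ) ^ k * min 1 ‖F' (y k) - g (y k)‖ ≤ d F' g := fun F' g k =>
    Summable.le_tsum (hsum F' g) k (fun j _ => hterm_nonneg F' g j)
  have hd_cont : ∀ g : Y →L[ℝ] ℝ,
      Continuous fun G : WeakDual ℝ Y => d (WeakDual.toStrongDual G) g := by
    intro g
    refine continuous_tsum (u := fun k => (1 / 2 : ℝ) ^ k) (fun k => ?_)
      summable_geometric_two (fun k G => ?_)
    · exact continuous_const.mul (continuous_const.min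
        ((WeakDual.eval_continuous (y k)).sub continuous_const).norm)
    · rw [Real.norm_eq_abs, abs_of_nonneg (hterm_nonneg _ g k)]
      exact hterm_le _ g k
  -- main claim : eventually close to W
  have hP : ∀ ε : ℝ, 0 < ε → ∀ᶠ n in atTop, ∃ g ∈ W, d (F n) g < ε := by
    intro ε hε
    by_contra hcon
    rw [Filter.not_eventually] at hcon
    have hcon' : ∃ᶠ n in atTop, ∀ g ∈ W, ε ≤ d (F n) g := by
      refine hcon.mono (fun n hn g hg => ?_)
      push_neg at hn
      exact hn g hg
    -- the compact set
    set SB : Set (WeakDual ℝ Y) := {G | ∀ z : Y, ‖G z‖ ≤ M * ‖z‖} with hSB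
    set SP : Set (WeakDual ℝ Y) := {G | ∀ g ∈ W, ε ≤ d (WeakDual.toStrongDual G) g} with hSP
    have hSBcompact : IsCompact SB := by
      have h1 := WeakDual.isCompact_closedBall (𝕜 := ℝ) (E := Y) 0 M
      have h2 : SB = WeakDual.toStrongDual ⁻¹' Metric.closedBall 0 M := by
        ext G
        simp only [hSB, Set.mem_setOf_eq, Set.mem_preimage, Metric.mem_closedBall,
          dist_zero_right]
        constructor
        · intro h
          exact ContinuousLinearMap.opNorm_le_bound _ hM0 (fun z => h z)
        · intro h z
          exact (ContinuousLinearMap.le_opNorm _ z).trans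
            (mul_le_mul_of_nonneg_right h (norm_nonneg z))
      rw [h2]
      exact h1
    have hSPclosed : IsClosed SP := by
      have : SP = ⋂ g ∈ W, (fun G : WeakDual ℝ Y => d (WeakDual.toStrongDual G) g) ⁻¹'
          Set.Ici ε := by
        ext G; simp [hSP]
      rw [this]
      exact isClosed_biInter (fun g hg => (isClosed_Ici).preimage (hd_cont g))
    have hScompact : IsCompact (SB ∩ SP) := hSBcompact.inter_right hSPclosed
    -- the sequence in the weak dual
    set Fw : ℕ → WeakDual ℝ Y := fun n => StrongDual.toWeakDual (F n) with hFw
    have hFwmem : ∃ᶠ n in atTop, Fw n ∈ SB ∩ SP := by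
      refine hcon'.mono (fun n hn => ⟨?_, ?_⟩)
      · intro z
        exact (ContinuousLinearMap.le_opNorm (F n) z).trans
          (mul_le_mul_of_nonneg_right (hFnormM n) (norm_nonneg z))
      · intro g hg
        exact hn g hg
    -- extract a cluster point
    have hNB : (atTop ⊓ Filter.principal (Fw ⁻¹' (SB ∩ SP))).NeBot := by
      exact Filter.frequently_iff_neBot.mp hFwmem
    set L : Filter (WeakDual ℝ Y) := Filter.map Fw (atTop ⊓ Filter.principal (Fw ⁻¹' (SB ∩ SP)))
      with hL
    have hLNB : L.NeBot := hNB.map Fw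
    have hLle : L ≤ Filter.principal (SB ∩ SP) := by
      rw [Filter.le_principal_iff]
      exact Filter.mem_map.mpr (Filter.mem_inf_of_right (Filter.mem_principal_self _))
    obtain ⟨G, hGmem, hGcl⟩ := hScompact.exists_clusterPt hLle
    -- G vanishes on X
    have hGX : ∀ x : ↥X, G (x : Y) = 0 := by
      intro x
      have hev : ContinuousAt (fun G' : WeakDual ℝ Y => G' (x : Y)) G :=
        (WeakDual.eval_continuous (x : Y)).continuousAt
      have htend : Tendsto (fun G' : WeakDual ℝ Y => G' (x : Y)) L (𝓝 0) := by
        have h1 : Tendsto (fun n => F n (x : Y)) atTop (𝓝 0) := by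
          have := hftend x
          refine this.congr (fun n => (hFext n x).symm)
        have h2 : Tendsto (fun n => Fw n (x : Y)) (atTop ⊓ Filter.principal (Fw ⁻¹' (SB ∩ SP)))
            (𝓝 0) := h1.mono_left inf_le_left
        rw [hL, Filter.tendsto_map'_iff]
        exact h2
      exact eq_of_nhds_neBot (hGcl.map hev htend)
    -- contradiction
    have hGW : WeakDual.toStrongDual G ∈ W := by
      constructor
      · exact ContinuousLinearMap.opNorm_le_bound _ hM0 (fun z => hGmem.1 z)
      · exact fun x => hGX x
    have := hGmem.2 (WeakDual.toStrongDual G) hGW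
    rw [hd_self] at this
    exact absurd this (not_le.mpr hε)
  -- choose approximations in W
  have hchoice : ∀ n : ℕ, ∃ g' ∈ W,
      d (F n) g' < sInf ((d (F n)) '' W) + 1 / (n + 1) := by
    intro n
    have hne : ((d (F n)) '' W).Nonempty := ⟨d (F n) 0, Set.mem_image_of_mem _ hW0⟩
    have hlt : sInf ((d (F n)) '' W) < sInf ((d (F n)) '' W) + 1 / (n + 1) := by
      have h0 : (0:ℝ) < 1 / (n + 1) := by positivity
      linarith
    obtain ⟨r, hr, hrlt⟩ := exists_lt_of_csInf_lt hne hlt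
    obtain ⟨g', hgW', rfl⟩ := hr
    exact ⟨g', hgW', hrlt⟩
  choose g hgW hgd using hchoice
  have hbdd : ∀ n, BddBelow ((d (F n)) '' W) := fun n =>
    ⟨0, by rintro r ⟨g', hg', rfl⟩; exact hd_nonneg _ _⟩
  have hs0 : ∀ n, 0 ≤ sInf ((d (F n)) '' W) := fun n =>
    Real.sInf_nonneg (by rintro r ⟨g', hg', rfl⟩; exact hd_nonneg _ _)
  have hstend : Tendsto (fun n => sInf ((d (F n)) '' W)) atTop (𝓝 0) := by
    rw [tendsto_order]
    constructor
    · intro a ha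
      exact Filter.Eventually.of_forall (fun n => lt_of_lt_of_le ha (hs0 n))
    · intro a ha
      refine (hP a ha).mono (fun n hn => ?_)
      obtain ⟨g', hg', hlt⟩ := hn
      exact lt_of_le_of_lt (csInf_le (hbdd n) (Set.mem_image_of_mem _ hg')) hlt
  have hdg : Tendsto (fun n => d (F n) (g n)) atTop (𝓝 0) := by
    have h1 : Tendsto (fun n : ℕ => sInf ((d (F n)) '' W) + 1 / (n + 1)) atTop (𝓝 0) := by
      have := hstend.add tendsto_one_div_add_atTop_nhds_zero_nat
      simpa using this
    exact squeeze_zero (fun n => hd_nonneg _ _) (fun n => (hgd n).le) h1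
  -- the difference operators
  set h : ℕ → (Y →L[ℝ] ℝ) := fun n => F n - g n with hh
  have hhnorm : ∀ n, ‖h n‖ ≤ 2 * M := fun n => by
    calc ‖F n - g n‖ ≤ ‖F n‖ + ‖g n‖ := norm_sub_le _ _
    _ ≤ M + M := add_le_add (hFnormM n) (hgW n).1
    _ = 2 * M := by ring
  have hhX : ∀ n (x : ↥X), h n (x : Y) = f n x := fun n x => by
    simp [hh, hFext n x, (hgW n).2 x]
  -- pointwise convergence on the dense set
  have hhk : ∀ k, Tendsto (fun n => h n (y k)) atTop (𝓝 0) := by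
    intro k
    rw [NormedAddCommGroup.tendsto_nhds_zero]
    intro ε hε
    have hmin : Tendsto (fun n => min 1 ‖h n (y k)‖) atTop (𝓝 0) := by
      have hb : Tendsto (fun n => (2:ℝ) ^ k * d (F n) (g n)) atTop (𝓝 0) := by
        simpa using hdg.const_mul ((2:ℝ) ^ k)
      refine squeeze_zero (fun n => le_min zero_le_one (norm_nonneg _)) (fun n => ?_) hb
      have h1 := hd_term_le (F n) (g n) k
      have h2 : (2:ℝ) ^ k * (1 / 2) ^ k = 1 := by rw [← mul_pow]; norm_num
      calc min 1 ‖h n (y k)‖ = (2:ℝ) ^ k * ((1 / 2) ^ k * min 1 ‖h n (y k)‖) := by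
            rw [← mul_assoc, h2, one_mul]
        _ ≤ (2:ℝ) ^ k * d (F n) (g n) := by
            refine mul_le_mul_of_nonneg_left ?_ (by positivity)
            simpa [hh] using h1
    have hε' : 0 < min 1 ε := lt_min one_pos hε
    have hev : ∀ᶠ n in atTop, min 1 ‖h n (y k)‖ < min 1 ε :=
      hmin.eventually_lt_const hε'
    refine hev.mono (fun n hn => ?_)
    rcases lt_or_ge ‖h n (y k)‖ 1 with h1 | h1
    · have he : min 1 ‖h n (y k)‖ = ‖h n (y k)‖ := min_eq_right h1.le
      rw [he] at hn
      exact lt_of_lt_of_le hn (min_le_right _ _)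
    · exfalso
      have he : min 1 ‖h n (y k)‖ = 1 := min_eq_left h1
      rw [he] at hn
      exact absurd hn (not_lt.mpr (min_le_left _ _))
  -- pointwise convergence everywhere
  have hhz : ∀ z : Y, Tendsto (fun n => h n z) atTop (𝓝 0) := by
    intro z
    rw [NormedAddCommGroup.tendsto_nhds_zero]
    intro ε hε
    have hδ : 0 < ε / (2 * (2 * M + 1)) := by positivity
    obtain ⟨k, hk⟩ := hy.exists_dist_lt z hδ
    have h1 : ∀ᶠ n in atTop, ‖h n (y k)‖ < ε / 2 := by
      have h2 := hhk k
      rw [NormedAddCommGroup.tendsto_nhds_zero] at h2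
      exact h2 (ε / 2) (by positivity)
    refine h1.mono (fun n hn => ?_)
    have h3 : ‖z - y k‖ < ε / (2 * (2 * M + 1)) := by rwa [← dist_eq_norm]
    have h2 : ‖h n z - h n (y k)‖ ≤ 2 * M * ‖z - y k‖ := by
      calc ‖h n z - h n (y k)‖ = ‖h n (z - y k)‖ := by rw [map_sub]
        _ ≤ ‖h n‖ * ‖z - y k‖ := ContinuousLinearMap.le_opNorm _ _
        _ ≤ 2 * M * ‖z - y k‖ := mul_le_mul_of_nonneg_right (hhnorm n) (norm_nonneg _)
    have h4 : 2 * M * ‖z - y k‖ < ε / 2 := by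
      have h5 : 2 * M * ‖z - y k‖ ≤ (2 * M + 1) * ‖z - y k‖ := by
        nlinarith [norm_nonneg (z - y k)]
      have h6 : (2 * M + 1) * ‖z - y k‖ < (2 * M + 1) * (ε / (2 * (2 * M + 1))) :=
        mul_lt_mul_of_pos_left h3 (by positivity)
      have h7 : (2 * M + 1) * (ε / (2 * (2 * M + 1))) = ε / 2 := by
        field_simp
      linarith
    calc ‖h n z‖ = ‖(h n z - h n (y k)) + h n (y k)‖ := by ring_nf
      _ ≤ ‖h n z - h n (y k)‖ + ‖h n (y k)‖ := norm_add_le _ _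
      _ < ε / 2 + ε / 2 := add_lt_add_of_le_of_lt (le_of_lt (lt_of_le_of_lt h2 h4)) hn
      _ = ε := by ring
  -- construct the operator
  have hmem : ∀ z : Y, Memℓp (fun n => h n z) ∞ := by
    intro z
    apply memℓp_infty
    refine ⟨2 * M * ‖z‖, ?_⟩
    rintro r ⟨n, rfl⟩
    exact (ContinuousLinearMap.le_opNorm (h n) z).trans
      (mul_le_mul_of_nonneg_right (hhnorm n) (norm_nonneg z))
  have hc0 : ∀ z : Y, (⟨fun n => h n z, hmem z⟩ : lp (fun _ : ℕ => ℝ) ∞) ∈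
      c0Submodule (fun _ : ℕ => ℝ) := by
    intro z
    rw [mem_c0Submodule_iff]
    have := (hhz z).norm
    simpa using this
  set Tlin : Y →ₗ[ℝ] ↥(c0Submodule (fun _ : ℕ => ℝ)) :=
    { toFun := fun z => ⟨⟨fun n => h n z, hmem z⟩, hc0 z⟩
      map_add' := by
        intro z1 z2
        apply Subtype.ext
        apply lp.ext
        funext n
        simp [lp.coeFn_add]
        rfl
      map_smul' := by
        intro c z
        apply Subtype.ext
        apply lp.ext
        funext n
        simp [lp.coeFn_smul] } with hTlin
  have hTnorm : ∀ z : Y, ‖Tlin z‖ ≤ 2 * M * ‖z‖ := by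
    intro z
    have heq : ‖Tlin z‖ = ‖((Tlin z : ↥(c0Submodule (fun _ : ℕ => ℝ))) :
        lp (fun _ : ℕ => ℝ) ∞)‖ := rfl
    rw [heq]
    refine lp.norm_le_of_forall_le (by positivity) (fun n => ?_)
    show ‖h n z‖ ≤ 2 * M * ‖z‖
    exact (ContinuousLinearMap.le_opNorm (h n) z).trans
      (mul_le_mul_of_nonneg_right (hhnorm n) (norm_nonneg z))
  refine ⟨LinearMap.mkContinuous Tlin (2 * M) hTnorm, ?_, ?_⟩
  · intro x
    apply Subtype.ext
    apply lp.ext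
    funext n
    show h n (x : Y) = (T x : lp (fun _ : ℕ => ℝ) ∞) n
    rw [hhX n x]
    rfl
  · simpa [hM] using LinearMap.mkContinuous_norm_le Tlin (by positivity) hTnorm
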